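/- For every real number x with 0 ≤ x ≤ 1, one has x + 0.38·x² ≤ (1 + x)·log(1 + x), where log denotes the natural logarithm. -/

import Mathlib

open Real Set

/-- Padé-type lower bound for log. -/
lemma log_lower_aux (x : ℝ) (hx0 : 0 ≤ x) :
    (2*x*(2+x)^2 + (2/3)*x^3)/(2+x)^3 ≤ Real.log (1+x) := by
  set F : ℝ → ℝ := fun z => Real.log (1+z) - (2*z*(2+z)^2 + (2/3)*z^3)/(2+z)^3 with hF
  have hd : ∀ y ∈ Set.Ici (0:ℝ), HasDerivAt F (y^4/((1+y)*(2+y)^4)) y := by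
    intro y hy
    have hy0 : (0:ℝ) ≤ y := hy
    have h1 : (1:ℝ) + y ≠ 0 := by positivity
    have h2 : (2:ℝ) + y ≠ 0 := by positivity
    have hlog : HasDerivAt (fun z : ℝ => Real.log (1+z)) (1/(1+y)) y := by
      have : HasDerivAt (fun z : ℝ => 1+z) 1 y := by
        simpa using (hasDerivAt_id y).const_add 1
      simpa using this.log h1
    have hN : HasDerivAt (fun z : ℝ => 2*z*(2+z)^2 + (2/3)*z^3)
        (2*(2+y)^2 + 2*y*(2*(2+y)) + (2/3)*(3*y^2)) y := by
      have h2z : HasDerivAt (fun z : ℝ => 2+z) 1 y := by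
        simpa using (hasDerivAt_id y).const_add 2
      have ha : HasDerivAt (fun z : ℝ => 2*z*(2+z)^2)
          (2*(2+y)^2 + 2*y*(2*(2+y))) y := by
        have hz : HasDerivAt (fun z : ℝ => 2*z) 2 y := by
          simpa using (hasDerivAt_id y).const_mul 2
        have hsq : HasDerivAt (fun z : ℝ => (2+z)^2) (2*(2+y)) y := by
          simpa using h2z.fun_pow 2
        have := hz.fun_mul hsq
        convert this using 1
      have hb : HasDerivAt (fun z : ℝ => (2/3)*z^3) ((2/3)*(3*y^2)) y := by
        have := (hasDerivAt_pow 3 y).const_mul (2/3 : ℝ)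
        simpa using this
      exact ha.add hb
    have hD : HasDerivAt (fun z : ℝ => (2+z)^3) (3*(2+y)^2) y := by
      have h2z : HasDerivAt (fun z : ℝ => 2+z) 1 y := by
        simpa using (hasDerivAt_id y).const_add 2
      simpa using h2z.fun_pow 3
    have hDiv := hN.fun_div hD (by positivity)
    have := hlog.fun_sub hDiv
    refine this.congr_deriv ?_
    field_simp
    ring
  have hmono : MonotoneOn F (Set.Ici (0:ℝ)) := by
    apply monotoneOn_of_deriv_nonneg (convex_Ici 0)
    · exact fun y hy => (hd y hy).continuousAt.continuousWithinAt
    · intro y hy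
      rw [interior_Ici] at hy
      exact (hd y (Set.mem_Ici.mpr (le_of_lt hy))).differentiableAt.differentiableWithinAt
    · intro y hy
      rw [interior_Ici] at hy
      rw [(hd y (Set.mem_Ici.mpr (le_of_lt hy))).deriv]
      have hy' : (0:ℝ) < y := hy
      have h4 : (0:ℝ) < (1+y)*(2+y)^4 := by
        have : (0:ℝ) < 2+y := by linarith
        have := pow_pos this 4
        nlinarith
      exact div_nonneg (by positivity) h4.le
  have h0 : F 0 = 0 := by simp [hF]
  have := hmono (Set.self_mem_Ici) (Set.mem_Ici.mpr hx0) hx0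
  rw [h0] at this
  have : 0 ≤ Real.log (1+x) - (2*x*(2+x)^2 + (2/3)*x^3)/(2+x)^3 := this
  linarith

/-- Claim: for 0 ≤ x ≤ 1, x + 0.38 x² ≤ (1+x) log(1+x). -/
theorem claim_038 (x : ℝ) (hx0 : 0 ≤ x) (hx1 : x ≤ 1) :
    x + 0.38 * x ^ 2 ≤ (1 + x) * Real.log (1 + x) := by
  have hlog := log_lower_aux x hx0
  have h2 : (0:ℝ) < (2+x)^3 := by positivity
  have hpoly : (x + 0.38 * x ^ 2) * (2+x)^3 ≤ (1+x) * (2*x*(2+x)^2 + (2/3)*x^3) := by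
    nlinarith [sq_nonneg x, sq_nonneg (1-x), mul_nonneg hx0 hx0,
      mul_nonneg (mul_nonneg hx0 hx0) hx0, sq_nonneg (x*(1-x)),
      mul_nonneg (mul_nonneg (mul_nonneg hx0 hx0) hx0) hx0]
  have h1x : (0:ℝ) ≤ 1 + x := by linarith
  calc x + 0.38 * x ^ 2 ≤ (1+x) * ((2*x*(2+x)^2 + (2/3)*x^3)/(2+x)^3) := by
        rw [mul_div_assoc'] at *
        rw [le_div_iff₀ h2]
        linarith [hpoly]
      _ ≤ (1 + x) * Real.log (1 + x) := by
        apply mul_le_mul_of_nonneg_left hlog h1x
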